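/- Let B be a real Banach space, q ∈ ℕ, and E ⊆ B a q-dimensional subspace. If T_n, T ∈ L(B) and T_n → T in the operator norm, then det(T_n | E) → det(T | E). -/

import Mathlib

open MeasureTheory Filter Metric Set
open scoped ENNReal NNReal Topology

namespace BanachMET

noncomputable section

/-- `ω q`: the Lebesgue volume of the Euclidean unit ball in `ℝ^q`. -/
def ballVol (q : ℕ) : ℝ≥0∞ :=
  volume (Metric.closedBall (0 : EuclideanSpace ℝ (Fin q)) 1)

/-- Extended logarithm of a real number, with the convention `log t = -∞` for `t ≤ 0`. -/
def elog (t : ℝ) : EReal := if t ≤ 0 then ⊥ else ((Real.log t : ℝ) : EReal)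

/-- Extended logarithm on `ℝ≥0∞`, with `log 0 = -∞` and `log ⊤ = ⊤`. -/
def elogE (t : ℝ≥0∞) : EReal :=
  if t = 0 then ⊥ else if t = ⊤ then ⊤ else ((Real.log t.toReal : ℝ) : EReal)

variable {B B' : Type*} [NormedAddCommGroup B] [NormedSpace ℝ B]
  [NormedAddCommGroup B'] [NormedSpace ℝ B']

section Volume
variable [MeasurableSpace B] [BorelSpace B] [MeasurableSpace B'] [BorelSpace B']

/-- The induced volume `m_E` on a finite dimensional subspace `E ⊆ B`: the unique
translation-invariant Borel measure on `E` assigning measure `ω_q` to the closed unit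
ball of `E`, where `q = dim E`.  (Junk value `0` if `E` is infinite dimensional.) -/
def inducedVolume (E : Submodule ℝ B) : Measure E := by
  classical
  exact if h : FiniteDimensional ℝ E then
    (ballVol (Module.finrank ℝ E) /
        (Module.finBasis ℝ E).addHaar (Metric.closedBall (0 : E) 1)) •
      (Module.finBasis ℝ E).addHaar
  else 0

/-- `det(A|E)`: the determinant of `A` on the finite dimensional subspace `E`,
defined as the ratio `m_{AE}(A(B_E)) / m_E(B_E)` (note `m_E(B_E) = ω_q`) if `A`
is injective on `E`, and `0` otherwise. -/
def detOn (A : B →L[ℝ] B') (E : Submodule ℝ B) : ℝ≥0∞ := by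
  classical
  exact if Set.InjOn A (E : Set B) then
    inducedVolume (E.map (A : B →ₗ[ℝ] B'))
        ((Subtype.val) ⁻¹' (A '' ((Subtype.val : E → B) '' Metric.closedBall (0 : E) 1))) /
      ballVol (Module.finrank ℝ E)
  else 0

/-- `V_q(A)`: the maximal `q`-dimensional volume growth of `A`
(with the convention `V_0(A) = 1`). -/
def maxVol (q : ℕ) (A : B →L[ℝ] B') : ℝ≥0∞ := by
  classical
  exact if q = 0 then 1 else
    ⨆ (E : Submodule ℝ B) (_ : FiniteDimensional ℝ E ∧ Module.finrank ℝ E = q), detOn A E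

end Volume

/-- The measure of noncompactness `|A|_α`. -/
def alphaMeasure (A : B →L[ℝ] B') : ℝ :=
  sInf {r : ℝ | 0 < r ∧ ∃ s : Finset B', (A '' Metric.closedBall 0 1) ⊆ ⋃ y ∈ s, Metric.ball y r}

/-- The annihilator `F° ⊆ B*` of a subspace `F ⊆ B` in the continuous dual. -/
def annih (F : Submodule ℝ B) : Submodule ℝ (B →L[ℝ] ℝ) where
  carrier := {ℓ | ∀ v ∈ F, ℓ v = 0}
  add_mem' := by
    intro a b ha hb v hv
    simp [ha v hv, hb v hv]
  zero_mem' := by intro v hv; simp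
  smul_mem' := by
    intro c ℓ h v hv
    simp [h v hv]

/-- The codimension of a subspace: the dimension of its annihilator in `B*`. -/
def codim (F : Submodule ℝ B) : ℕ := Module.finrank ℝ (annih F)

/-- `sin θ(E,F)` where `θ(E,F)` is the minimal angle from `E` to `F`. -/
def sinAngle (E F : Submodule ℝ B) : ℝ :=
  sInf {d : ℝ | ∃ e ∈ E, ‖e‖ = 1 ∧ ∃ f ∈ F, d = ‖e - f‖}

/-- The norm of the (possibly unbounded) projection onto `E` parallel to `F`. -/
def projNorm (E F : Submodule ℝ B) : ℝ :=
  sSup {r : ℝ | ∃ e ∈ E, ∃ f ∈ F, ‖e + f‖ ≤ 1 ∧ r = ‖e‖}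

/-- The Hausdorff distance `d_H` between the unit spheres of two subspaces. -/
def sphDist (E F : Submodule ℝ B) : ℝ :=
  Metric.hausdorffDist ((E : Set B) ∩ Metric.sphere (0 : B) 1)
    ((F : Set B) ∩ Metric.sphere (0 : B) 1)

/-- The gap `δ(U,V)`. -/
def gap (U V : Submodule ℝ B) : ℝ :=
  sSup {d : ℝ | ∃ u ∈ U, ‖u‖ = 1 ∧ d = Metric.infDist u (V : Set B)}

/-- `π` is the (bounded) projection onto `E` parallel to `F`. -/
def IsProjOnto (E F : Submodule ℝ B) (π : B →L[ℝ] B) : Prop :=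
  (∀ e ∈ E, π e = e) ∧ ∀ f ∈ F, π f = 0

/-- The Gelfand numbers `c_q(A)` (for `q ≥ 1`). -/
def gelfand (q : ℕ) (A : B →L[ℝ] B') : ℝ := by
  classical
  exact if q ≤ 1 then ‖A‖
  else sInf {c : ℝ | ∃ R : Submodule ℝ B, IsClosed (R : Set B) ∧ codim R = q - 1 ∧
    c = ‖A.comp R.subtypeL‖}

/-- `p` is an inner product on the subspace `E ⊆ B`. -/
structure IsInnerOn (E : Submodule ℝ B) (p : B → B → ℝ) : Prop where
  add_left : ∀ u ∈ E, ∀ v ∈ E, ∀ w ∈ E, p (u + v) w = p u w + p v w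
  smul_left : ∀ (c : ℝ), ∀ u ∈ E, ∀ v ∈ E, p (c • u) v = c * p u v
  symm : ∀ u ∈ E, ∀ v ∈ E, p u v = p v u
  posdef : ∀ u ∈ E, u ≠ 0 → 0 < p u u

/-- Iterates `T^n_x = T_{f^{n-1} x} ∘ ⋯ ∘ T_x` of the cocycle `T` over the base map `f`. -/
def iter {X : Type*} (T : X → B →L[ℝ] B) (f : X → X) : ℕ → X → B →L[ℝ] B
  | 0, _ => ContinuousLinearMap.id ℝ B
  | n + 1, x => (iter T f n (f x)).comp (T x)

/-- Uniform measurability: `T` is the pointwise norm limit of a sequence of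
finite-valued measurable maps. -/
def UniformlyMeasurable {X : Type*} [MeasurableSpace X] (T : X → B →L[ℝ] B) : Prop :=
  ∃ S : ℕ → X → B →L[ℝ] B,
    (∀ n, (Set.range (S n)).Finite) ∧
    (∀ n (A : B →L[ℝ] B), MeasurableSet {x | S n x = A}) ∧
    ∀ x, Tendsto (fun n => ‖S n x - T x‖) atTop (𝓝 0)

/-- The slow-growing set `F_λ(x)`. -/
def slowSpace {X : Type*} (T : X → B →L[ℝ] B) (f : X → X) (lam : ℝ) (x : X) : Set B :=
  {v : B | Filter.limsup (fun n : ℕ => (((n : ℝ)⁻¹ : ℝ) : EReal) * elog ‖iter T f n x v‖)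
      atTop ≤ (lam : EReal)}


open scoped Pointwise

lemma ballVol_ne_zero (q : ℕ) : ballVol q ≠ 0 := by
  have : (0 : EuclideanSpace ℝ (Fin q)) ∈ Metric.ball (0 : EuclideanSpace ℝ (Fin q)) 1 :=
    Metric.mem_ball_self one_pos
  have h := measure_ball_pos (volume : Measure (EuclideanSpace ℝ (Fin q))) 0 one_pos
  exact fun h0 => (h.trans_le (le_trans (measure_mono Metric.ball_subset_closedBall) h0.le)).false

lemma ballVol_ne_top (q : ℕ) : ballVol q ≠ ∞ :=
  measure_closedBall_lt_top.ne


-- aux 1: antilipschitz for injective linear maps from fin-dim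
lemma exists_norm_le_of_injective {V W : Type*} [NormedAddCommGroup V] [NormedSpace ℝ V]
    [FiniteDimensional ℝ V] [NormedAddCommGroup W] [NormedSpace ℝ W]
    (u : V →ₗ[ℝ] W) (hu : Function.Injective u) :
    ∃ c : ℝ, 0 < c ∧ ∀ x, c * ‖x‖ ≤ ‖u x‖ := by
  let e : V ≃L[ℝ] LinearMap.range u := (LinearEquiv.ofInjective u hu).toContinuousLinearEquiv
  set K : ℝ := ‖(e.symm : LinearMap.range u →L[ℝ] V)‖ + 1 with hK
  have hK0 : 0 < K := by positivity
  refine ⟨K⁻¹, by positivity, fun x => ?_⟩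
  rw [inv_mul_le_iff₀ hK0]
  have h2 : e.symm (e x) = x := e.symm_apply_apply x
  have h3 : ‖e x‖ = ‖u x‖ := by
    have : ((e x : LinearMap.range u) : W) = u x := by
      simp [e, LinearEquiv.coe_toContinuousLinearEquiv', LinearEquiv.ofInjective_apply]
    rw [← this]; rfl
  calc ‖x‖ = ‖e.symm (e x)‖ := by rw [h2]
    _ ≤ ‖(e.symm : LinearMap.range u →L[ℝ] V)‖ * ‖e x‖ :=
        (e.symm : LinearMap.range u →L[ℝ] V).le_opNorm _
    _ ≤ K * ‖u x‖ := by
        rw [h3]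
        exact mul_le_mul_of_nonneg_right (by rw [hK]; linarith) (norm_nonneg _)

-- aux 2: ENNReal algebra
lemma ennreal_calc (a c vD vS : ℝ≥0∞) (ha0 : a ≠ 0) (hat : a ≠ ∞) (hc0 : c ≠ 0) (hct : c ≠ ∞)
    (hs0 : vS ≠ 0) (hst : vS ≠ ∞) :
    a / (c * vS) * (c * vD) / a = vD / vS := by
  rw [div_eq_mul_inv, div_eq_mul_inv, div_eq_mul_inv,
    ENNReal.mul_inv (Or.inl hc0) (Or.inl hct)]
  have h : a * (c⁻¹ * vS⁻¹) * (c * vD) * a⁻¹ = (a * a⁻¹) * (c⁻¹ * c) * (vD * vS⁻¹) := by ring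
  rw [h, ENNReal.mul_inv_cancel ha0 hat, ENNReal.inv_mul_cancel hc0 hct, one_mul, one_mul]

lemma detOn_eq_div {B : Type*} [NormedAddCommGroup B] [NormedSpace ℝ B]
    [MeasurableSpace B] [BorelSpace B]
    (q : ℕ) (E : Submodule ℝ B) [FiniteDimensional ℝ E] (hE : Module.finrank ℝ E = q)
    (b : Module.Basis (Fin q) ℝ E) (A : B →L[ℝ] B) (hA : Set.InjOn A (E : Set B)) :
    detOn A E = volume {x : Fin q → ℝ | ‖((b.equivFun.symm x : E) : B)‖ ≤ 1} /
      volume {x : Fin q → ℝ | ‖A ((b.equivFun.symm x : E) : B)‖ ≤ 1} := by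
  classical
  set D : Set (Fin q → ℝ) := {x | ‖((b.equivFun.symm x : E) : B)‖ ≤ 1} with hD
  set SA : Set (Fin q → ℝ) := {x | ‖A ((b.equivFun.symm x : E) : B)‖ ≤ 1} with hSA
  -- the linear algebra
  let f : E →ₗ[ℝ] B := (A : B →ₗ[ℝ] B) ∘ₗ E.subtype
  have hfappl : ∀ v : E, f v = A (v : B) := fun _ => rfl
  have hf : Function.Injective f := by
    intro u v huv
    exact Subtype.ext (hA u.2 v.2 huv)
  have hrange : LinearMap.range f = E.map (A : B →ₗ[ℝ] B) := by
    ext x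
    simp only [LinearMap.mem_range, Submodule.mem_map]
    constructor
    · rintro ⟨v, rfl⟩; exact ⟨(v : B), v.2, rfl⟩
    · rintro ⟨v, hv, rfl⟩; exact ⟨⟨v, hv⟩, rfl⟩
  haveI hFD : FiniteDimensional ℝ (E.map (A : B →ₗ[ℝ] B) : Submodule ℝ B) := by
    rw [← hrange]; infer_instance
  let e : E ≃ₗ[ℝ] (E.map (A : B →ₗ[ℝ] B) : Submodule ℝ B) :=
    (LinearEquiv.ofInjective f hf).trans (LinearEquiv.ofEq _ _ hrange)
  have he : ∀ v : E, ((e v : (E.map (A : B →ₗ[ℝ] B) : Submodule ℝ B)) : B) = A (v : B) := by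
    intro v
    simp [e, LinearEquiv.ofInjective_apply, hfappl]
  have hqF : Module.finrank ℝ (E.map (A : B →ₗ[ℝ] B) : Submodule ℝ B) = q := by
    rw [← hE]; exact (LinearEquiv.finrank_eq e).symm
  let ψ : (Fin q → ℝ) ≃ₗ[ℝ] (E.map (A : B →ₗ[ℝ] B) : Submodule ℝ B) := b.equivFun.symm.trans e
  have hψ : ∀ x, ((ψ x : (E.map (A : B →ₗ[ℝ] B) : Submodule ℝ B)) : B) = A ((b.equivFun.symm x : E) : B) :=
    fun x => he _
  -- measures
  set ν : Measure (E.map (A : B →ₗ[ℝ] B) : Submodule ℝ B) := (Module.finBasis ℝ (E.map (A : B →ₗ[ℝ] B) : Submodule ℝ B)).addHaar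
    with hν
  set ρ : Measure (Fin q → ℝ) := ν.map ψ.symm with hρ
  haveI hρH : ρ.IsAddHaarMeasure := by rw [hρ]; infer_instance
  have hmeas_symm : Measurable ⇑ψ.symm := by
    have h : Continuous (ψ.symm.toLinearMap) := ψ.symm.toLinearMap.continuous_of_finiteDimensional
    exact h.measurable
  have himg : ∀ s : Set (Fin q → ℝ), MeasurableSet s → ν (ψ '' s) = ρ s := by
    intro s hs
    rw [hρ, Measure.map_apply hmeas_symm hs]
    congr 1
    ext g
    simp only [Set.mem_preimage, Set.mem_image]
    constructor
    · rintro ⟨x, hx, rfl⟩; rwa [ψ.symm_apply_apply]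
    · intro hg; exact ⟨ψ.symm g, hg, ψ.apply_symm_apply g⟩
  set c : ℝ≥0 := Measure.addHaarScalarFactor ρ (volume : Measure (Fin q → ℝ)) with hc
  have hρ_eq : ρ = c • (volume : Measure (Fin q → ℝ)) :=
    Measure.isAddLeftInvariant_eq_smul ρ volume
  have hc0 : c ≠ 0 := (Measure.addHaarScalarFactor_pos_of_isAddHaarMeasure ρ volume).ne'
  -- measurability of D, SA
  have hcont1 : Continuous fun x : Fin q → ℝ => ((b.equivFun.symm x : E) : B) :=
    continuous_subtype_val.comp
      ((b.equivFun.symm.toLinearMap.continuous_of_finiteDimensional :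
        Continuous b.equivFun.symm.toLinearMap))
  have hDmeas : MeasurableSet D := (isClosed_le hcont1.norm continuous_const).measurableSet
  have hSAmeas : MeasurableSet SA :=
    (isClosed_le ((A.continuous.comp hcont1).norm) continuous_const).measurableSet
  -- the two set identities
  have hKset : ((Subtype.val) ⁻¹'
      (A '' ((Subtype.val : E → B) '' Metric.closedBall (0 : E) 1))
        : Set (E.map (A : B →ₗ[ℝ] B) : Submodule ℝ B)) = ψ '' D := by
    ext g
    simp only [Set.mem_preimage, Set.mem_image]
    constructor
    · rintro ⟨w, ⟨v, hv, rfl⟩, hg⟩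
      refine ⟨b.equivFun v, ?_, ?_⟩
      · simp only [hD, Set.mem_setOf_eq, b.equivFun.symm_apply_apply]
        simpa [mem_closedBall_zero_iff] using hv
      · apply Subtype.ext
        rw [hψ, b.equivFun.symm_apply_apply, hg]
    · rintro ⟨x, hx, rfl⟩
      refine ⟨((b.equivFun.symm x : E) : B), ⟨b.equivFun.symm x, ?_, rfl⟩, (hψ x).symm⟩
      simp only [mem_closedBall_zero_iff]
      simpa [hD, Set.mem_setOf_eq] using hx
  have hBall : Metric.closedBall (0 : (E.map (A : B →ₗ[ℝ] B) : Submodule ℝ B)) 1 = ψ '' SA := by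
    ext g
    simp only [Metric.mem_closedBall, dist_zero_right, Set.mem_image]
    constructor
    · intro hg
      refine ⟨ψ.symm g, ?_, ψ.apply_symm_apply g⟩
      have h1 : ‖A ((b.equivFun.symm (ψ.symm g) : E) : B)‖ = ‖g‖ := by
        rw [← hψ, ψ.apply_symm_apply]; rfl
      show ‖A ((b.equivFun.symm (ψ.symm g) : E) : B)‖ ≤ 1
      rw [h1]; exact hg
    · rintro ⟨x, hx, rfl⟩
      have h1 : ‖ψ x‖ = ‖A ((b.equivFun.symm x : E) : B)‖ := by rw [← hψ]; rfl
      rw [h1]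
      exact hx
  -- positivity/finiteness of the unit ball measure in the image
  haveI : ProperSpace (E.map (A : B →ₗ[ℝ] B) : Submodule ℝ B) := FiniteDimensional.proper ℝ _
  have hball_pos : 0 < ν (Metric.closedBall (0 : (E.map (A : B →ₗ[ℝ] B) : Submodule ℝ B)) 1) := by
    refine lt_of_lt_of_le (measure_ball_pos ν 0 one_pos) (measure_mono Metric.ball_subset_closedBall)
  have hball_fin : ν (Metric.closedBall (0 : (E.map (A : B →ₗ[ℝ] B) : Submodule ℝ B)) 1) < ∞ :=
    measure_closedBall_lt_top
  have hcv : ν (Metric.closedBall (0 : (E.map (A : B →ₗ[ℝ] B) : Submodule ℝ B)) 1)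
      = (c : ℝ≥0∞) * volume SA := by
    rw [hBall, himg _ hSAmeas, hρ_eq]
    exact Measure.coe_nnreal_smul_apply _ _ _
  have hS0 : volume SA ≠ 0 := by
    intro h
    rw [h, mul_zero] at hcv
    exact hball_pos.ne' hcv
  have hSt : volume SA ≠ ∞ := by
    intro h
    rw [h, ENNReal.mul_top (by exact_mod_cast hc0)] at hcv
    exact hball_fin.ne hcv
  -- unfold detOn
  unfold detOn inducedVolume
  rw [if_pos hA, dif_pos hFD]
  rw [Measure.smul_apply, smul_eq_mul]
  rw [hKset, ← hν, himg _ hDmeas, hcv, hρ_eq, hqF, hE]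
  have hsmul : (c • (volume : Measure (Fin q → ℝ))) D = (c : ℝ≥0∞) * volume D := by
    exact Measure.coe_nnreal_smul_apply _ _ _
  rw [hsmul]
  exact ennreal_calc (ballVol q) (c : ℝ≥0∞) (volume D) (volume SA)
    (ballVol_ne_zero q) (ballVol_ne_top q) (by exact_mod_cast hc0) ENNReal.coe_ne_top hS0 hSt

set_option maxHeartbeats 1600000 in
theorem statement15
    {B : Type*} [NormedAddCommGroup B] [NormedSpace ℝ B] [CompleteSpace B]
    [MeasurableSpace B] [BorelSpace B]
    (q : ℕ) (E : Submodule ℝ B) [FiniteDimensional ℝ E] (hE : Module.finrank ℝ E = q)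
    (Tn : ℕ → B →L[ℝ] B) (T : B →L[ℝ] B)
    (hconv : Tendsto (fun n => ‖Tn n - T‖) atTop (𝓝 0)) :
    Tendsto (fun n => detOn (Tn n) E) atTop (𝓝 (detOn T E)) := by
  classical
  let b : Module.Basis (Fin q) ℝ E := (Module.finBasis ℝ E).reindex (finCongr hE)
  set Lf : (Fin q → ℝ) →ₗ[ℝ] B :=
    E.subtype ∘ₗ (b.equivFun.symm : (Fin q → ℝ) ≃ₗ[ℝ] E).toLinearMap with hLfdef
  have hLapp : ∀ x, Lf x = ((b.equivFun.symm x : E) : B) := fun _ => rfl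
  have hLmem : ∀ x, Lf x ∈ E := fun x => (b.equivFun.symm x).2
  have hLinj : Function.Injective Lf := by
    intro x y hxy
    exact b.equivFun.symm.injective (Subtype.ext hxy)
  have hLcont : Continuous Lf := Lf.continuous_of_finiteDimensional
  let Lc : (Fin q → ℝ) →L[ℝ] B := ⟨Lf, hLcont⟩
  set CL : ℝ := ‖Lc‖ + 1 with hCLdef
  have hCL0 : 0 < CL := by positivity
  have hLle : ∀ x, ‖Lf x‖ ≤ CL * ‖x‖ := by
    intro x
    calc ‖Lf x‖ = ‖Lc x‖ := rfl
      _ ≤ ‖Lc‖ * ‖x‖ := Lc.le_opNorm x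
      _ ≤ CL * ‖x‖ := mul_le_mul_of_nonneg_right (by rw [hCLdef]; linarith) (norm_nonneg x)
  set D : Set (Fin q → ℝ) := {x | ‖((b.equivFun.symm x : E) : B)‖ ≤ 1} with hD
  set SS : (B →L[ℝ] B) → Set (Fin q → ℝ) :=
    fun A => {x | ‖A ((b.equivFun.symm x : E) : B)‖ ≤ 1} with hSS
  have key : ∀ A : B →L[ℝ] B, Set.InjOn A (E : Set B) →
      detOn A E = volume D / volume (SS A) := fun A hA => detOn_eq_div q E hE b A hA
  have hmemS : ∀ (A : B →L[ℝ] B) x, x ∈ SS A ↔ ‖A (Lf x)‖ ≤ 1 := fun A x => Iff.rfl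
  have hmemD : ∀ x, x ∈ D ↔ ‖Lf x‖ ≤ 1 := fun x => Iff.rfl
  have hdiff : ∀ (A A' : B →L[ℝ] B) x, ‖A (Lf x)‖ ≤ ‖A' (Lf x)‖ + ‖A - A'‖ * (CL * ‖x‖) := by
    intro A A' x
    have h1 : ‖A (Lf x)‖ - ‖A' (Lf x)‖ ≤ ‖A (Lf x) - A' (Lf x)‖ := norm_sub_norm_le _ _
    have h2 : A (Lf x) - A' (Lf x) = (A - A') (Lf x) := by simp
    have h3 : ‖(A - A') (Lf x)‖ ≤ ‖A - A'‖ * ‖Lf x‖ := (A - A').le_opNorm _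
    have h4 : ‖A - A'‖ * ‖Lf x‖ ≤ ‖A - A'‖ * (CL * ‖x‖) :=
      mul_le_mul_of_nonneg_left (hLle x) (norm_nonneg _)
    rw [h2] at h1
    linarith
  have hrk : Module.finrank ℝ (Fin q → ℝ) = q := Module.finrank_fin_fun ℝ
  have hscale : ∀ (A : B →L[ℝ] B) (t : ℝ), 0 < t →
      volume {x : Fin q → ℝ | ‖A (Lf x)‖ ≤ t} = ENNReal.ofReal (t ^ q) * volume (SS A) := by
    intro A t ht
    have hset : {x : Fin q → ℝ | ‖A (Lf x)‖ ≤ t} = t • SS A := by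
      ext x
      rw [Set.mem_smul_set_iff_inv_smul_mem₀ ht.ne', hmemS, Set.mem_setOf_eq,
        _root_.map_smul, _root_.map_smul, norm_smul, norm_inv, Real.norm_eq_abs, abs_of_pos ht,
        inv_mul_le_iff₀ ht, mul_one]
    rw [hset]
    rw [Measure.addHaar_smul volume t (SS A), hrk, abs_of_pos (pow_pos ht q)]
  have hDfin : volume D ≠ ∞ := by
    obtain ⟨cD, hcD0, hcD⟩ := exists_norm_le_of_injective Lf hLinj
    have hsub : D ⊆ Metric.closedBall 0 cD⁻¹ := by
      intro x hx
      rw [mem_closedBall_zero_iff]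
      have h1 : cD * ‖x‖ ≤ 1 := (hcD x).trans ((hmemD x).1 hx)
      calc ‖x‖ = cD⁻¹ * (cD * ‖x‖) := by field_simp
        _ ≤ cD⁻¹ * 1 := mul_le_mul_of_nonneg_left h1 (inv_nonneg.2 hcD0.le)
        _ = cD⁻¹ := mul_one _
    exact ((measure_mono hsub).trans_lt measure_closedBall_lt_top).ne
  have hLcapp : ∀ x, Lc x = Lf x := fun _ => rfl
  clear_value b Lf Lc CL D SS
  by_cases hT : Set.InjOn T (E : Set B)
  · -- T injective on E
    obtain ⟨c, hc0, hc⟩ := exists_norm_le_of_injective ((T : B →ₗ[ℝ] B) ∘ₗ Lf)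
      (fun x y hxy => hLinj (hT (hLmem x) (hLmem y) hxy))
    have hc' : ∀ x, c * ‖x‖ ≤ ‖T (Lf x)‖ := hc
    have hSfin : volume (SS T) ≠ ∞ := by
      have hsub : SS T ⊆ Metric.closedBall 0 c⁻¹ := by
        intro x hx
        rw [mem_closedBall_zero_iff]
        have h1 : c * ‖x‖ ≤ 1 := (hc' x).trans ((hmemS T x).1 hx)
        calc ‖x‖ = c⁻¹ * (c * ‖x‖) := by field_simp
          _ ≤ c⁻¹ * 1 := mul_le_mul_of_nonneg_left h1 (inv_nonneg.2 hc0.le)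
          _ = c⁻¹ := mul_one _
      exact ((measure_mono hsub).trans_lt measure_closedBall_lt_top).ne
    set CT : ℝ := ‖T.comp Lc‖ + 1 with hCT
    have hCT0 : 0 < CT := by positivity
    have hgle : ∀ x, ‖T (Lf x)‖ ≤ CT * ‖x‖ := by
      intro x
      calc ‖T (Lf x)‖ = ‖(T.comp Lc) x‖ := by
            rw [ContinuousLinearMap.comp_apply, hLcapp]
        _ ≤ ‖T.comp Lc‖ * ‖x‖ := (T.comp Lc).le_opNorm x
        _ ≤ CT * ‖x‖ := mul_le_mul_of_nonneg_right (by rw [hCT]; linarith) (norm_nonneg _)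
    have hS0 : volume (SS T) ≠ 0 := by
      have hsub : Metric.ball 0 CT⁻¹ ⊆ SS T := by
        intro x hx
        rw [mem_ball_zero_iff] at hx
        rw [hmemS]
        calc ‖T (Lf x)‖ ≤ CT * ‖x‖ := hgle x
          _ ≤ CT * CT⁻¹ := mul_le_mul_of_nonneg_left hx.le hCT0.le
          _ = 1 := mul_inv_cancel₀ hCT0.ne'
      exact fun h => ((measure_ball_pos volume 0 (inv_pos.2 hCT0)).trans_le
        ((measure_mono hsub).trans h.le)).false
    set ε : ℕ → ℝ := fun n => ‖Tn n - T‖ with hεdef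
    have hε0 : ∀ n, 0 ≤ ε n := fun n => norm_nonneg _
    set δ : ℕ → ℝ := fun n => ε n * (CL / c) with hδdef
    have hδ0 : ∀ n, 0 ≤ δ n := fun n => mul_nonneg (hε0 n) (by positivity)
    have hδto : Tendsto δ atTop (𝓝 0) := by
      have h := hconv.mul_const (CL / c)
      simpa [hδdef] using h
    have hev : ∀ᶠ n in atTop, δ n < 1/2 := hδto.eventually_lt_const (by norm_num : (0:ℝ) < 1/2)
    have hεδ : ∀ (n : ℕ) (x : Fin q → ℝ), ε n * (CL * ‖x‖) = δ n * (c * ‖x‖) := by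
      intro n x
      simp only [hδdef]
      field_simp
    have hεapp : ∀ n, ε n = ‖Tn n - T‖ := fun n => by rw [hεdef]
    clear_value ε δ
    have hinj : ∀ n, δ n < 1/2 → Set.InjOn (Tn n) (E : Set B) := by
      intro n hn u hu v hv huv
      by_contra hne
      set zE : E := ⟨u, hu⟩ - ⟨v, hv⟩ with hzE
      have hzE0 : zE ≠ 0 := by
        intro h; apply hne
        have h2 : (⟨u, hu⟩ : E) = ⟨v, hv⟩ := by rwa [sub_eq_zero] at h
        exact congrArg Subtype.val h2
      set x : Fin q → ℝ := b.equivFun zE with hx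
      have hxne : x ≠ 0 := by
        intro h; apply hzE0
        have h2 := congrArg b.equivFun.symm h
        rwa [hx, LinearEquiv.symm_apply_apply, map_zero] at h2
      have hxpos : 0 < ‖x‖ := norm_pos_iff.2 hxne
      have hLx : Lf x = u - v := by
        rw [hLapp, hx, LinearEquiv.symm_apply_apply, hzE]
        simp
      have hTnx : Tn n (Lf x) = 0 := by rw [hLx, map_sub, huv, sub_self]
      have hb1 : c * ‖x‖ ≤ ‖T (Lf x)‖ := hc' x
      have hb2 : ‖T (Lf x)‖ ≤ ‖Tn n (Lf x)‖ + ‖T - Tn n‖ * (CL * ‖x‖) := hdiff T (Tn n) x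
      rw [hTnx, norm_zero, zero_add, norm_sub_rev] at hb2
      have h4 := hεδ n x
      rw [hεapp n] at h4
      rw [h4] at hb2
      have h6 : c * ‖x‖ ≤ δ n * (c * ‖x‖) := le_trans hb1 hb2
      have h7 : (0:ℝ) < c * ‖x‖ := mul_pos hc0 hxpos
      nlinarith [h6, h7, hn, mul_pos (by linarith : (0:ℝ) < 1 - δ n) h7]
    have hup : ∀ n, δ n < 1/2 →
        volume (SS (Tn n)) ≤ ENNReal.ofReal (((1 - δ n)⁻¹) ^ q) * volume (SS T) := by
      intro n hn
      have h1δ : 0 < 1 - δ n := by linarith [hδ0 n]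
      have hsub : SS (Tn n) ⊆ {x | ‖T (Lf x)‖ ≤ (1 - δ n)⁻¹} := by
        intro x hx
        rw [hmemS] at hx
        have hb2 : ‖T (Lf x)‖ ≤ ‖Tn n (Lf x)‖ + ‖T - Tn n‖ * (CL * ‖x‖) := hdiff T (Tn n) x
        rw [norm_sub_rev] at hb2
        have hxb : c * ‖x‖ ≤ ‖T (Lf x)‖ := hc' x
        have h4 := hεδ n x
        rw [hεapp n] at h4
        rw [h4] at hb2
        have h5 : δ n * (c * ‖x‖) ≤ δ n * ‖T (Lf x)‖ :=
          mul_le_mul_of_nonneg_left hxb (hδ0 n)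
        have h3 : (1 - δ n) * ‖T (Lf x)‖ ≤ 1 := by
          have h7 : (1 - δ n) * ‖T (Lf x)‖ = ‖T (Lf x)‖ - δ n * ‖T (Lf x)‖ := by ring
          rw [h7]
          linarith
        show ‖T (Lf x)‖ ≤ (1 - δ n)⁻¹
        calc ‖T (Lf x)‖ = (1 - δ n)⁻¹ * ((1 - δ n) * ‖T (Lf x)‖) := by field_simp
          _ ≤ (1 - δ n)⁻¹ * 1 := mul_le_mul_of_nonneg_left h3 (inv_nonneg.2 h1δ.le)
          _ = (1 - δ n)⁻¹ := mul_one _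
      calc volume (SS (Tn n)) ≤ volume {x | ‖T (Lf x)‖ ≤ (1 - δ n)⁻¹} := measure_mono hsub
        _ = ENNReal.ofReal (((1 - δ n)⁻¹) ^ q) * volume (SS T) := hscale T _ (inv_pos.2 h1δ)
    have hlo : ∀ n, δ n < 1/2 →
        ENNReal.ofReal ((1 - δ n) ^ q) * volume (SS T) ≤ volume (SS (Tn n)) := by
      intro n hn
      have h1δ : 0 < 1 - δ n := by linarith [hδ0 n]
      have hsub : {x | ‖T (Lf x)‖ ≤ 1 - δ n} ⊆ SS (Tn n) := by
        intro x hx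
        rw [hmemS]
        have hx' : ‖T (Lf x)‖ ≤ 1 - δ n := hx
        have hb2 : ‖Tn n (Lf x)‖ ≤ ‖T (Lf x)‖ + ‖Tn n - T‖ * (CL * ‖x‖) := hdiff (Tn n) T x
        have hxb : c * ‖x‖ ≤ ‖T (Lf x)‖ := hc' x
        have h4 := hεδ n x
        rw [hεapp n] at h4
        rw [h4] at hb2
        have h5 : δ n * (c * ‖x‖) ≤ δ n * ‖T (Lf x)‖ :=
          mul_le_mul_of_nonneg_left hxb (hδ0 n)
        have h6 : δ n * ‖T (Lf x)‖ ≤ δ n * (1 - δ n) :=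
          mul_le_mul_of_nonneg_left hx' (hδ0 n)
        have h8 : δ n * (1 - δ n) ≤ δ n * 1 :=
          mul_le_mul_of_nonneg_left (by linarith [hδ0 n]) (hδ0 n)
        linarith
      calc ENNReal.ofReal ((1 - δ n) ^ q) * volume (SS T)
          = volume {x | ‖T (Lf x)‖ ≤ 1 - δ n} := (hscale T _ h1δ).symm
        _ ≤ volume (SS (Tn n)) := measure_mono hsub
    have hlot : Tendsto (fun n => ENNReal.ofReal ((1 - δ n) ^ q) * volume (SS T)) atTop
        (𝓝 (volume (SS T))) := by
      have h1 : Tendsto (fun n => (1 - δ n) ^ q) atTop (𝓝 1) := by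
        have h0 : Tendsto (fun n => 1 - δ n) atTop (𝓝 ((1:ℝ) - 0)) :=
          Tendsto.sub tendsto_const_nhds hδto
        have h := h0.pow q
        simpa using h
      have h2 : Tendsto (fun n => ENNReal.ofReal ((1 - δ n) ^ q)) atTop (𝓝 1) := by
        have h := (ENNReal.continuous_ofReal.tendsto 1).comp h1
        rw [ENNReal.ofReal_one] at h
        exact h
      have h3 : Tendsto (fun n => ENNReal.ofReal ((1 - δ n) ^ q) * volume (SS T)) atTop
          (𝓝 (1 * volume (SS T))) :=
        ENNReal.Tendsto.mul_const h2 (Or.inl (one_ne_zero : (1:ℝ≥0∞) ≠ 0))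
      simpa using h3
    have hupt : Tendsto (fun n => ENNReal.ofReal (((1 - δ n)⁻¹) ^ q) * volume (SS T)) atTop
        (𝓝 (volume (SS T))) := by
      have h1 : Tendsto (fun n => ((1 - δ n)⁻¹) ^ q) atTop (𝓝 1) := by
        have h0 : Tendsto (fun n => 1 - δ n) atTop (𝓝 ((1:ℝ) - 0)) :=
          Tendsto.sub tendsto_const_nhds hδto
        have h := (h0.inv₀ (by norm_num : (1:ℝ) - 0 ≠ 0)).pow q
        simpa using h
      have h2 : Tendsto (fun n => ENNReal.ofReal (((1 - δ n)⁻¹) ^ q)) atTop (𝓝 1) := by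
        have h := (ENNReal.continuous_ofReal.tendsto 1).comp h1
        rw [ENNReal.ofReal_one] at h
        exact h
      have h3 : Tendsto (fun n => ENNReal.ofReal (((1 - δ n)⁻¹) ^ q) * volume (SS T)) atTop
          (𝓝 (1 * volume (SS T))) :=
        ENNReal.Tendsto.mul_const h2 (Or.inl (one_ne_zero : (1:ℝ≥0∞) ≠ 0))
      simpa using h3
    have hSto : Tendsto (fun n => volume (SS (Tn n))) atTop (𝓝 (volume (SS T))) :=
      tendsto_of_tendsto_of_tendsto_of_le_of_le' hlot hupt
        (hev.mono fun n hn => hlo n hn) (hev.mono fun n hn => hup n hn)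
    rw [key T hT]
    refine Tendsto.congr' ?_ (ENNReal.Tendsto.const_div hSto (Or.inl hSfin))
    filter_upwards [hev] with n hn
    exact (key (Tn n) (hinj n hn)).symm
  · -- T not injective on E
    have hdT : detOn T E = 0 := by unfold detOn; rw [if_neg hT]
    rw [hdT]
    rw [Set.InjOn] at hT
    push_neg at hT
    obtain ⟨u, hu, v, hv, huv, hne⟩ := hT
    set zE : E := ⟨u, hu⟩ - ⟨v, hv⟩ with hzE
    have hzE0 : zE ≠ 0 := by
      intro h; apply hne
      have h2 : (⟨u, hu⟩ : E) = ⟨v, hv⟩ := by rwa [sub_eq_zero] at h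
      exact congrArg Subtype.val h2
    set x₀ : Fin q → ℝ := b.equivFun zE with hx₀
    have hx₀ne : x₀ ≠ 0 := by
      intro h; apply hzE0
      have h2 := congrArg b.equivFun.symm h
      rwa [hx₀, LinearEquiv.symm_apply_apply, map_zero] at h2
    have hx₀n : 0 < ‖x₀‖ := norm_pos_iff.2 hx₀ne
    have hLx₀ : T (Lf x₀) = 0 := by
      rw [hLapp, hx₀, LinearEquiv.symm_apply_apply, hzE]
      have : (((⟨u, hu⟩ : E) - ⟨v, hv⟩ : E) : B) = u - v := by simp
      rw [this, map_sub, huv, sub_self]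
    set CT : ℝ := ‖T.comp Lc‖ + 1 with hCT
    have hCT0 : 0 < CT := by positivity
    have hgle : ∀ x, ‖T (Lf x)‖ ≤ CT * ‖x‖ := by
      intro x
      calc ‖T (Lf x)‖ = ‖(T.comp Lc) x‖ := by
            rw [ContinuousLinearMap.comp_apply, hLcapp]
        _ ≤ ‖T.comp Lc‖ * ‖x‖ := (T.comp Lc).le_opNorm x
        _ ≤ CT * ‖x‖ := mul_le_mul_of_nonneg_right (by rw [hCT]; linarith) (norm_nonneg _)
    set r : ℝ := (2 * CT)⁻¹ with hr
    have hr0 : 0 < r := by positivity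
    have hCTr : CT * r ≤ 1/2 := by
      rw [hr]
      rw [mul_inv, ← mul_assoc]
      have h2 : CT * 2⁻¹ * CT⁻¹ = 2⁻¹ * (CT * CT⁻¹) := by ring
      rw [h2, mul_inv_cancel₀ hCT0.ne', mul_one]
      norm_num
    set t : ℝ := (2 * r + 1) / ‖x₀‖ with ht
    have ht0 : 0 < t := by positivity
    set cm : ℕ → (Fin q → ℝ) := fun k => ((k : ℝ) * t) • x₀ with hcm
    have hgc : ∀ k : ℕ, ∀ y ∈ Metric.ball (cm k) r, ‖T (Lf y)‖ ≤ 1/2 := by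
      intro k y hy
      rw [Metric.mem_ball] at hy
      have h0 : T (Lf (cm k)) = 0 := by
        simp only [hcm]
        rw [_root_.map_smul, _root_.map_smul, hLx₀, smul_zero]
      have h1 : T (Lf (y - cm k)) = T (Lf y) := by
        rw [map_sub, map_sub, h0, sub_zero]
      rw [← h1]
      calc ‖T (Lf (y - cm k))‖ ≤ CT * ‖y - cm k‖ := hgle _
        _ ≤ CT * r := mul_le_mul_of_nonneg_left (by rw [← dist_eq_norm]; exact hy.le) hCT0.le
        _ ≤ 1/2 := hCTr
    have htx : t * ‖x₀‖ = 2 * r + 1 := by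
      rw [ht, div_mul_cancel₀ _ hx₀n.ne']
    have hdisj : Pairwise (Function.onFun Disjoint fun k : ℕ => Metric.ball (cm k) r) := by
      intro k k' hkk'
      apply Metric.ball_disjoint_ball
      have h1 : (1:ℝ) ≤ |(k:ℝ) - (k':ℝ)| := by
        have h0 : (k:ℤ) - (k':ℤ) ≠ 0 := sub_ne_zero.2 (by exact_mod_cast hkk')
        have h5 := Int.one_le_abs h0
        have h6 : ((|(k:ℤ) - (k':ℤ)| : ℤ) : ℝ) = |(k:ℝ) - (k':ℝ)| := by push_cast; ring_nf
        calc (1:ℝ) = ((1:ℤ):ℝ) := by norm_num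
          _ ≤ ((|(k:ℤ) - (k':ℤ)| : ℤ) : ℝ) := by exact_mod_cast h5
          _ = |(k:ℝ) - (k':ℝ)| := h6
      have h2 : dist (cm k) (cm k') = |(k:ℝ) - (k':ℝ)| * (t * ‖x₀‖) := by
        simp only [hcm]
        rw [dist_eq_norm, ← sub_smul, norm_smul, Real.norm_eq_abs]
        have h7 : (k:ℝ) * t - (k':ℝ) * t = ((k:ℝ) - (k':ℝ)) * t := by ring
        rw [h7, abs_mul, abs_of_pos ht0]
        ring
      have h3 : 1 * (2 * r + 1) ≤ |(k:ℝ) - (k':ℝ)| * (2 * r + 1) :=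
        mul_le_mul_of_nonneg_right h1 (by positivity)
      rw [one_mul] at h3
      rw [h2, htx]
      linarith [hr0]
    clear_value CT t cm
    set vb : ℝ≥0∞ := volume (Metric.ball (0 : Fin q → ℝ) r) with hvb
    have hvb0 : vb ≠ 0 := (measure_ball_pos volume 0 hr0).ne'
    have hvbt : vb ≠ ∞ :=
      ((measure_mono Metric.ball_subset_closedBall).trans_lt measure_closedBall_lt_top).ne
    have hUm : ∀ m : ℕ, volume (⋃ k : Fin m, Metric.ball (cm (k : ℕ)) r) = m * vb := by
      intro m
      have hdm : Pairwise (Function.onFun Disjoint fun k : Fin m => Metric.ball (cm (k : ℕ)) r) := by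
        intro k k' hkk'
        exact hdisj (fun h => hkk' (Fin.val_injective h))
      rw [measure_iUnion hdm (fun k => measurableSet_ball)]
      have hcb : ∀ k : Fin m, volume (Metric.ball (cm (k : ℕ)) r) = vb := by
        intro k
        rw [hvb]
        exact Measure.addHaar_ball_center volume (cm (k : ℕ)) r
      rw [tsum_congr hcb, tsum_fintype]
      simp [Finset.sum_const, Finset.card_univ, nsmul_eq_mul]
    have hincl : ∀ m : ℕ, ∀ᶠ n in atTop,
        (⋃ k : Fin m, Metric.ball (cm (k : ℕ)) r) ⊆ SS (Tn n) := by
      intro m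
      set R : ℝ := (m : ℝ) * t * ‖x₀‖ + r with hR
      clear_value R
      have hnorm : ∀ k : Fin m, ∀ y ∈ Metric.ball (cm (k : ℕ)) r, ‖y‖ ≤ R := by
        intro k y hy
        rw [Metric.mem_ball] at hy
        have hck : ‖cm (k : ℕ)‖ ≤ (m:ℝ) * t * ‖x₀‖ := by
          simp only [hcm]
          rw [norm_smul, Real.norm_eq_abs]
          have h8 : |((k:ℕ):ℝ) * t| = ((k:ℕ):ℝ) * t := abs_of_nonneg (by positivity)
          rw [h8]
          have hk : ((k:ℕ):ℝ) ≤ (m:ℝ) := by exact_mod_cast k.2.le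
          nlinarith [ht0, hx₀n.le]
        have h9 : ‖y‖ ≤ ‖cm (k : ℕ)‖ + dist y (cm (k : ℕ)) := by
          rw [dist_eq_norm]
          calc ‖y‖ = ‖cm (k:ℕ) + (y - cm (k:ℕ))‖ := by ring_nf
            _ ≤ ‖cm (k:ℕ)‖ + ‖y - cm (k:ℕ)‖ := norm_add_le _ _
        rw [hR]
        linarith
      have hevsmall : ∀ᶠ n in atTop, ‖Tn n - T‖ * (CL * R) < 1/2 := by
        have h := hconv.mul_const (CL * R)
        rw [zero_mul] at h
        exact h.eventually_lt_const (by norm_num)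
      filter_upwards [hevsmall] with n hn
      intro y hy
      rw [Set.mem_iUnion] at hy
      obtain ⟨k, hk⟩ := hy
      rw [hmemS]
      have h1 : ‖T (Lf y)‖ ≤ 1/2 := hgc (k : ℕ) y hk
      have h2 : ‖Tn n (Lf y)‖ ≤ ‖T (Lf y)‖ + ‖Tn n - T‖ * (CL * ‖y‖) := hdiff (Tn n) T y
      have h3 : ‖Tn n - T‖ * (CL * ‖y‖) ≤ ‖Tn n - T‖ * (CL * R) := by
        apply mul_le_mul_of_nonneg_left _ (norm_nonneg _)
        exact mul_le_mul_of_nonneg_left (hnorm k y hk) hCL0.le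
      linarith
    have htop : Tendsto (fun n => volume (SS (Tn n))) atTop (𝓝 ∞) := by
      rw [ENNReal.tendsto_nhds_top_iff_nnreal]
      intro M
      obtain ⟨m, hm⟩ : ∃ m : ℕ, (M : ℝ≥0∞) < m * vb := by
        have hfin : (M : ℝ≥0∞) / vb < ∞ := ENNReal.div_lt_top ENNReal.coe_ne_top hvb0
        obtain ⟨m, hm'⟩ := ENNReal.exists_nat_gt hfin.ne
        refine ⟨m, ?_⟩
        rwa [ENNReal.div_lt_iff (Or.inl hvb0) (Or.inl hvbt)] at hm'
      filter_upwards [hincl m] with n hn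
      calc (M : ℝ≥0∞) < m * vb := hm
        _ = volume (⋃ k : Fin m, Metric.ball (cm (k : ℕ)) r) := (hUm m).symm
        _ ≤ volume (SS (Tn n)) := measure_mono hn
    have hub : ∀ n, detOn (Tn n) E ≤ volume D / volume (SS (Tn n)) := by
      intro n
      by_cases h : Set.InjOn (Tn n) (E : Set B)
      · rw [key (Tn n) h]
      · unfold detOn; rw [if_neg h]; exact zero_le
    have hdiv : Tendsto (fun n => volume D / volume (SS (Tn n))) atTop (𝓝 0) := by
      have h := ENNReal.Tendsto.const_div htop (Or.inr hDfin)
      simpa [ENNReal.div_top] using h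
    exact tendsto_of_tendsto_of_tendsto_of_le_of_le tendsto_const_nhds hdiv
      (fun n => zero_le) hub


end
end BanachMET
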